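/- Let n ≥ 2, let (H_m)_{m≥1} be a sequence of hyperplanes through the origin in ℝⁿ with unit normals (u_m), and let ♢ be a symmetrization on 𝒦ⁿ belonging to the family ℱ. Suppose the angles α_m ∈ [0, π/2] defined by |u_m · u_{m−1}| = cos α_m satisfy Σ_m α_m < ∞. Then the sequence of hyperplanes (H_m) converges (the orthogonal reflections R_{H_m} converge in operator norm) and (H_m) is ♢-stable on 𝒦ⁿ, i.e. for every k ≥ 1 and every K ∈ 𝒦ⁿ the sequence (♢_{H_m} ∘ ⋯ ∘ ♢_{H_k})(K), m ≥ k, converges in the Hausdorff metric. -/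

import Mathlib

open Filter Topology Metric Set Pointwise MeasureTheory

noncomputable section

abbrev Euc (n : ℕ) := EuclideanSpace ℝ (Fin n)

def IsConvexBody {n : ℕ} (K : Set (Euc n)) : Prop :=
  K.Nonempty ∧ IsCompact K ∧ Convex ℝ K

def reflMap {n : ℕ} (H : Submodule ℝ (Euc n)) : Euc n → Euc n :=
  (H.reflection : Euc n ≃ₗᵢ[ℝ] Euc n)

/-- The orthogonal reflection in `H` as a continuous linear map. -/
def reflCLM {n : ℕ} (H : Submodule ℝ (Euc n)) : Euc n →L[ℝ] Euc n :=
  (H.reflection).toLinearIsometry.toContinuousLinearMap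

/-- `iterSeq T k K j = T_{k+j} ∘ ⋯ ∘ T_k` applied to `K`. -/
def iterSeq {n : ℕ} (T : ℕ → Set (Euc n) → Set (Euc n)) (k : ℕ) (K : Set (Euc n)) :
    ℕ → Set (Euc n)
  | 0 => T k K
  | j + 1 => T (k + j + 1) (iterSeq T k K j)

structure IsInF {n : ℕ} (D : Submodule ℝ (Euc n) → Set (Euc n) → Set (Euc n)) : Prop where
  body : ∀ ⦃H : Submodule ℝ (Euc n)⦄, H ≠ ⊥ → H ≠ ⊤ → ∀ ⦃K⦄, IsConvexBody K →
    IsConvexBody (D H K)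
  symmetric : ∀ ⦃H : Submodule ℝ (Euc n)⦄, H ≠ ⊥ → H ≠ ⊤ → ∀ ⦃K⦄, IsConvexBody K →
    reflMap H '' D H K = D H K
  mono : ∀ ⦃H : Submodule ℝ (Euc n)⦄, H ≠ ⊥ → H ≠ ⊤ → ∀ ⦃K L⦄, IsConvexBody K →
    IsConvexBody L → K ⊆ L → D H K ⊆ D H L
  transInv : ∀ ⦃H : Submodule ℝ (Euc n)⦄, H ≠ ⊥ → H ≠ ⊤ → ∀ ⦃K⦄, IsConvexBody K →
    reflMap H '' K = K → ∀ x ∈ Hᗮ, D H (K + {x}) = K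
  inv : ∀ ⦃H : Submodule ℝ (Euc n)⦄, H ≠ ⊥ → H ≠ ⊤ → ∀ ⦃K⦄, IsConvexBody K →
    reflMap H '' K = K → D H K = K

/-! ### Auxiliary lemmas -/

lemma reflMap_formula {n : ℕ} {w : Euc n} (hw : ‖w‖ = 1) (x : Euc n) :
    reflMap (ℝ ∙ w)ᗮ x = x - (2 * (inner ℝ w x : ℝ)) • w := by
  show (Submodule.reflection (ℝ ∙ w)ᗮ : Euc n ≃ₗᵢ[ℝ] Euc n) x = _
  rw [Submodule.reflection_apply, Submodule.starProjection_orthogonal_val,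
    Submodule.starProjection_unit_singleton ℝ hw]
  module

lemma refl_close {n : ℕ} {a b : Euc n} (ha : ‖a‖ = 1) (hb : ‖b‖ = 1) {t : ℝ}
    (ht : 0 ≤ t) (hab : |(inner ℝ a b : ℝ)| = Real.cos t)
    (x : Euc n) :
    ‖reflMap (ℝ ∙ a)ᗮ x - reflMap (ℝ ∙ b)ᗮ x‖ ≤ 4 * t * ‖x‖ := by
  obtain ⟨s, hs0, habs, hmul⟩ : ∃ s : ℝ, s ≠ 0 ∧ |s| = 1 ∧
      s * (inner ℝ a b : ℝ) = |(inner ℝ a b : ℝ)| := by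
    rcases le_or_gt 0 (inner ℝ a b : ℝ) with h | h
    · exact ⟨1, one_ne_zero, abs_one, by rw [one_mul, abs_of_nonneg h]⟩
    · exact ⟨-1, by norm_num, by norm_num, by rw [neg_one_mul, abs_of_neg h]⟩
  set b' : Euc n := s • b with hb'def
  have hb' : ‖b'‖ = 1 := by
    rw [hb'def, norm_smul, Real.norm_eq_abs, habs, hb, one_mul]
  have hspan : (ℝ ∙ b') = ℝ ∙ b := Submodule.span_singleton_smul_eq (IsUnit.mk0 s hs0) b
  have hip : (inner ℝ a b' : ℝ) = Real.cos t := by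
    rw [hb'def, real_inner_smul_right, hmul, hab]
  have hdist : ‖a - b'‖ ≤ t := by
    have h1 : ‖a - b'‖ ^ 2 = ‖a‖ ^ 2 - 2 * inner ℝ a b' + ‖b'‖ ^ 2 := norm_sub_sq_real a b'
    have h2 : 1 - t ^ 2 / 2 ≤ Real.cos t := Real.one_sub_sq_div_two_le_cos
    have h3 : ‖a - b'‖ ^ 2 ≤ t ^ 2 := by rw [h1, ha, hb', hip]; nlinarith
    exact (pow_le_pow_iff_left₀ (norm_nonneg _) ht two_ne_zero).1 h3
  rw [← hspan, reflMap_formula ha, reflMap_formula hb']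
  have heq : (x - (2 * (inner ℝ a x : ℝ)) • a) - (x - (2 * (inner ℝ b' x : ℝ)) • b')
      = (2 * (inner ℝ b' x : ℝ)) • (b' - a) + (2 * (inner ℝ b' x : ℝ) - 2 * (inner ℝ a x : ℝ)) • a := by
    module
  rw [heq]
  have hcs1 : |(inner ℝ b' x : ℝ)| ≤ ‖x‖ := by
    have := abs_real_inner_le_norm b' x; rwa [hb', one_mul] at this
  have hcs2 : |(inner ℝ b' x : ℝ) - (inner ℝ a x : ℝ)| ≤ ‖a - b'‖ * ‖x‖ := by
    calc |(inner ℝ b' x : ℝ) - inner ℝ a x| = |(inner ℝ (b' - a) x : ℝ)| := by rw [inner_sub_left]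
    _ ≤ ‖b' - a‖ * ‖x‖ := abs_real_inner_le_norm _ _
    _ = ‖a - b'‖ * ‖x‖ := by rw [norm_sub_rev]
  calc ‖(2 * (inner ℝ b' x : ℝ)) • (b' - a) + (2 * (inner ℝ b' x : ℝ) - 2 * (inner ℝ a x : ℝ)) • a‖
      ≤ ‖(2 * (inner ℝ b' x : ℝ)) • (b' - a)‖ + ‖(2 * (inner ℝ b' x : ℝ) - 2 * (inner ℝ a x : ℝ)) • a‖ :=
        norm_add_le _ _
    _ = |2 * (inner ℝ b' x : ℝ)| * ‖b' - a‖ + |2 * (inner ℝ b' x : ℝ) - 2 * inner ℝ a x| * ‖a‖ := by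
        rw [norm_smul, norm_smul, Real.norm_eq_abs, Real.norm_eq_abs]
    _ ≤ 4 * t * ‖x‖ := by
        rw [ha, norm_sub_rev, mul_one]
        have h4 : |2 * (inner ℝ b' x : ℝ)| ≤ 2 * ‖x‖ := by
          rw [abs_mul, abs_two]
          exact mul_le_mul_of_nonneg_left hcs1 (by norm_num)
        have h5 : |2 * (inner ℝ b' x : ℝ) - 2 * inner ℝ a x| ≤ 2 * (‖a - b'‖ * ‖x‖) := by
          have he : 2 * (inner ℝ b' x : ℝ) - 2 * inner ℝ a x
              = 2 * ((inner ℝ b' x : ℝ) - inner ℝ a x) := by ring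
          rw [he, abs_mul, abs_two]
          exact mul_le_mul_of_nonneg_left hcs2 (by norm_num)
        nlinarith [norm_nonneg (a - b'), norm_nonneg x,
          abs_nonneg (2 * (inner ℝ b' x : ℝ)), mul_nonneg (norm_nonneg (a-b')) (norm_nonneg x)]

lemma hyp_ne_bot {n : ℕ} (hn : 2 ≤ n) {w : Euc n} (hw : ‖w‖ = 1) : (ℝ ∙ w)ᗮ ≠ ⊥ := by
  intro h
  have h1 : (ℝ ∙ w) = ⊤ := Submodule.orthogonal_eq_bot_iff.1 h
  have h2 : Module.finrank ℝ (ℝ ∙ w) = 1 :=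
    finrank_span_singleton (by intro h0; rw [h0] at hw; simp at hw)
  rw [h1, finrank_top] at h2
  have : Module.finrank ℝ (Euc n) = n := finrank_euclideanSpace_fin
  omega

lemma hyp_ne_top {n : ℕ} {w : Euc n} (hw : ‖w‖ = 1) : (ℝ ∙ w)ᗮ ≠ ⊤ := by
  intro h
  have h1 : (ℝ ∙ w) = ⊥ := (Submodule.orthogonal_eq_top_iff _).1 h
  have : w ∈ (⊥ : Submodule ℝ (Euc n)) := h1 ▸ Submodule.mem_span_singleton_self w
  rw [Submodule.mem_bot] at this
  rw [this] at hw; simp at hw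

lemma reflMap_image_ball {n : ℕ} (H : Submodule ℝ (Euc n)) (ρ : ℝ) :
    reflMap H '' closedBall 0 ρ = closedBall 0 ρ := by
  ext y
  simp only [Set.mem_image, mem_closedBall_zero_iff]
  constructor
  · rintro ⟨x, hx, rfl⟩
    rwa [show ‖reflMap H x‖ = ‖x‖ from (Submodule.reflection H).norm_map x]
  · intro hy
    refine ⟨reflMap H y, ?_, ?_⟩
    · rwa [show ‖reflMap H y‖ = ‖y‖ from (Submodule.reflection H).norm_map y]
    · exact Submodule.reflection_reflection H y

lemma reflMap_involutive {n : ℕ} (H : Submodule ℝ (Euc n)) (x : Euc n) :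
    reflMap H (reflMap H x) = x := Submodule.reflection_reflection H x

lemma reflMap_injective {n : ℕ} (H : Submodule ℝ (Euc n)) : Function.Injective (reflMap H) :=
  (Submodule.reflection H).injective

lemma reflMap_image_image {n : ℕ} (H : Submodule ℝ (Euc n)) (s : Set (Euc n)) :
    reflMap H '' (reflMap H '' s) = s := by
  rw [← Set.image_comp]
  simp only [Function.comp_def, reflMap_involutive, Set.image_id']

lemma reflMap_convex {n : ℕ} (H : Submodule ℝ (Euc n)) {s : Set (Euc n)} (hs : Convex ℝ s) :
    Convex ℝ (reflMap H '' s) := by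
  have : reflMap H '' s = ((Submodule.reflection H).toLinearEquiv.toLinearMap) '' s := rfl
  rw [this]
  exact hs.linear_image _

lemma reflMap_compact {n : ℕ} (H : Submodule ℝ (Euc n)) {s : Set (Euc n)} (hs : IsCompact s) :
    IsCompact (reflMap H '' s) :=
  hs.image (Submodule.reflection H).continuous

/-- The abstract convergence lemma: a uniformly bounded sequence of nonempty compact
sets whose "expansions" are summable converges in the Hausdorff distance. -/
lemma hausdorff_limit {n : ℕ} (A : ℕ → Set (Euc n)) (ρ : ℝ)
    (hne : ∀ j, (A j).Nonempty) (hcpt : ∀ j, IsCompact (A j))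
    (hbd : ∀ j, A j ⊆ closedBall 0 ρ)
    (δ : ℕ → ℝ) (hδ0 : ∀ j, 0 ≤ δ j) (hδ : Summable δ)
    (hstep : ∀ j, A (j + 1) ⊆ A j + closedBall 0 (δ (j + 1))) :
    ∃ L : Set (Euc n), L.Nonempty ∧ IsCompact L ∧
      Tendsto (fun j => hausdorffDist (A j) L) atTop (𝓝 0) := by
  -- tail sums
  set t : ℕ → ℝ := fun m => ∑' k, δ (k + (m + 1)) with ht
  have htsummable : ∀ m, Summable (fun k => δ (k + m)) := fun m => (summable_nat_add_iff m).2 hδ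
  have ht0 : ∀ m, 0 ≤ t m := fun m => tsum_nonneg (fun k => hδ0 _)
  have htt : Tendsto t atTop (𝓝 0) :=
    (tendsto_sum_nat_add δ).comp (tendsto_add_atTop_nat 1)
  -- chain inclusion
  have chain : ∀ m j, A (m + j) ⊆ A m + closedBall 0 (t m) := by
    intro m j
    have key : ∀ j, A (m + j) ⊆ A m + closedBall 0 (∑ i ∈ Finset.range j, δ (m + i + 1)) := by
      intro j
      induction j with
      | zero =>
        simp only [Finset.range_zero, Finset.sum_empty, Nat.add_zero]
        intro x hx
        exact ⟨x, hx, 0, by simp, by simp⟩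
      | succ j ih =>
        have h1 : A (m + (j + 1)) ⊆ A (m + j) + closedBall 0 (δ (m + j + 1)) := by
          have := hstep (m + j); rwa [show m + j + 1 = m + (j + 1) by omega] at this
        refine h1.trans ?_
        intro x hx
        obtain ⟨y, hy, b, hb, hxy⟩ := hx
        obtain ⟨z, hz, c, hc, hyz⟩ := ih hy
        refine ⟨z, hz, c + b, ?_, by rw [← hxy, ← hyz]; exact (add_assoc z c b).symm⟩
        rw [mem_closedBall_zero_iff] at *
        rw [Finset.sum_range_succ]
        calc ‖c + b‖ ≤ ‖c‖ + ‖b‖ := norm_add_le _ _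
          _ ≤ _ := add_le_add hc hb
    refine (key j).trans (Set.add_subset_add_left (closedBall_subset_closedBall ?_))
    have : ∑ i ∈ Finset.range j, δ (m + i + 1)
        = ∑ i ∈ Finset.range j, (fun k => δ (k + (m+1))) i := by
      apply Finset.sum_congr rfl; intro i _; congr 1; omega
    rw [this]
    exact Summable.sum_le_tsum (Finset.range j) (fun i _ => hδ0 _) (htsummable (m + 1))
  -- the decreasing hulls
  set B : ℕ → Set (Euc n) := fun m => closure (⋃ j ∈ Ici m, A j) with hB
  have hBclosed : ∀ m, IsClosed (B m) := fun m => isClosed_closure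
  have hBsub : ∀ m, B m ⊆ closedBall 0 ρ := by
    intro m
    apply closure_minimal _ Metric.isClosed_closedBall
    exact Set.iUnion₂_subset fun j _ => hbd j
  have hBcpt : ∀ m, IsCompact (B m) :=
    fun m => (isCompact_closedBall _ _).of_isClosed_subset (hBclosed m) (hBsub m)
  have hBne : ∀ m, (B m).Nonempty := by
    intro m
    obtain ⟨x, hx⟩ := hne m
    exact ⟨x, subset_closure (Set.mem_biUnion (Set.mem_Ici.2 le_rfl) hx)⟩
  have hAB : ∀ m, A m ⊆ B m := fun m => (Set.subset_biUnion_of_mem le_rfl).trans subset_closure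
  have hBanti : Antitone B := by
    apply antitone_nat_of_succ_le
    intro m
    apply closure_mono
    exact Set.biUnion_subset_biUnion_left (fun j hj => le_trans (Nat.le_succ m) hj)
  have hBA : ∀ m, B m ⊆ A m + closedBall 0 (t m) := by
    intro m
    apply closure_minimal _ (((hcpt m).add (isCompact_closedBall _ _)).isClosed)
    apply Set.iUnion₂_subset
    intro j hj
    obtain ⟨i, rfl⟩ := Nat.exists_eq_add_of_le hj
    exact chain m i
  set L : Set (Euc n) := ⋂ m, B m with hL
  have hLne : L.Nonempty := by
    apply IsCompact.nonempty_iInter_of_directed_nonempty_isCompact_isClosed B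
      (hBanti.directed_ge) hBne hBcpt hBclosed
  have hLcpt : IsCompact L :=
    (hBcpt 0).of_isClosed_subset (isClosed_iInter hBclosed) (Set.iInter_subset _ 0)
  refine ⟨L, hLne, hLcpt, ?_⟩
  rw [Metric.tendsto_atTop]
  intro ε hε
  obtain ⟨N₁, hN₁⟩ := (Metric.tendsto_atTop.1 htt) (ε / 2) (by linarith)
  have hUopen : IsOpen (thickening (ε / 2) L) := isOpen_thickening
  obtain ⟨N₂, hN₂⟩ : ∃ m, B 0 ∩ (thickening (ε / 2) L)ᶜ ∩ B m = ∅ := by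
    apply IsCompact.elim_directed_family_closed
      ((hBcpt 0).inter_right hUopen.isClosed_compl) B hBclosed
    · apply Set.eq_empty_iff_forall_notMem.2
      rintro x ⟨⟨-, hxc⟩, hxL⟩
      exact hxc (self_subset_thickening (by linarith) L hxL)
    · exact hBanti.directed_ge
  have hBN₂ : B N₂ ⊆ thickening (ε / 2) L := by
    intro y hy
    by_contra hyc
    have : y ∈ B 0 ∩ (thickening (ε / 2) L)ᶜ ∩ B N₂ :=
      ⟨⟨hBanti (Nat.zero_le N₂) hy, hyc⟩, hy⟩
    rw [hN₂] at this
    exact this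
  refine ⟨max N₁ N₂, fun j hj => ?_⟩
  have hj1 : N₁ ≤ j := le_trans (le_max_left _ _) hj
  have hj2 : N₂ ≤ j := le_trans (le_max_right _ _) hj
  have hd : hausdorffDist (A j) L ≤ ε / 2 := by
    apply hausdorffDist_le_of_mem_dist (by linarith)
    · intro x hx
      have hxU : x ∈ thickening (ε / 2) L := hBN₂ (hBanti hj2 (hAB j hx))
      obtain ⟨z, hz, hdz⟩ := mem_thickening_iff.1 hxU
      exact ⟨z, hz, le_of_lt hdz⟩
    · intro y hy
      have hyB : y ∈ A j + closedBall 0 (t j) := hBA j (Set.iInter_subset B j hy)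
      obtain ⟨a, ha, b, hb, hab⟩ := hyB
      refine ⟨a, ha, ?_⟩
      have : dist y a = ‖b‖ := by rw [dist_eq_norm, ← hab]; simp
      rw [this]
      rw [mem_closedBall_zero_iff] at hb
      have htj : t j < ε / 2 := by
        have := hN₁ j hj1
        rwa [Real.dist_0_eq_abs, abs_of_nonneg (ht0 j)] at this
      linarith
  rw [Real.dist_0_eq_abs, abs_of_nonneg hausdorffDist_nonneg]
  linarith

/-- If the angles `α_m ∈ [0, π/2]` between consecutive unit normals `u_m`, given by
`|u_m · u_{m-1}| = cos α_m`, are summable, then the hyperplanes `H_m = u_m^⊥` converge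
(their reflections converge in operator norm) and `(H_m)` is `D`-stable on the convex
bodies for every symmetrization `D ∈ ℱ`. -/
theorem stmt13 {n : ℕ} (hn : 2 ≤ n)
    (u : ℕ → Euc n) (hu : ∀ m, 1 ≤ m → ‖u m‖ = 1)
    (D : Submodule ℝ (Euc n) → Set (Euc n) → Set (Euc n)) (hD : IsInF D)
    (α : ℕ → ℝ) (hα : ∀ m, α m ∈ Icc 0 (Real.pi / 2))
    (hangle : ∀ m, 2 ≤ m → |(inner ℝ (u m) (u (m - 1)) : ℝ)| = Real.cos (α m))
    (hsum : Summable α) :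
    (∃ T : Euc n →L[ℝ] Euc n, Tendsto (fun m => reflCLM ((ℝ ∙ u m)ᗮ)) atTop (𝓝 T)) ∧
      (∀ k, 1 ≤ k → ∀ K : Set (Euc n), IsConvexBody K →
        ∃ L : Set (Euc n), L.Nonempty ∧ IsCompact L ∧
          Tendsto (fun j => hausdorffDist (iterSeq (fun m => D ((ℝ ∙ u m)ᗮ)) k K j) L)
            atTop (𝓝 0)) := by
  constructor
  · -- Part 1: convergence of the reflections
    set f : ℕ → Euc n →L[ℝ] Euc n := fun m => reflCLM ((ℝ ∙ u m)ᗮ) with hf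
    set d : ℕ → ℝ := fun m => if m = 0 then dist (f 0) (f 1) else 4 * α (m + 1) with hd
    have hstep : ∀ m, dist (f m) (f (m + 1)) ≤ d m := by
      intro m
      match m with
      | 0 => simp [hd]
      | m + 1 =>
        have h2 : 2 ≤ m + 2 := by omega
        have hab := hangle (m + 2) h2
        have heq : (m + 2) - 1 = m + 1 := by omega
        rw [heq] at hab
        rw [dist_eq_norm]
        have hb : d (m + 1) = 4 * α (m + 2) := by simp [hd]
        rw [hb]
        apply ContinuousLinearMap.opNorm_le_bound _
          (by nlinarith [(hα (m+2)).1]) (fun x => ?_)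
        have h := refl_close (hu (m+2) (by omega)) (hu (m+1) (by omega)) (hα (m+2)).1 hab x
        calc ‖(f (m+1) - f (m+2)) x‖
            = ‖reflMap (ℝ ∙ u (m+2))ᗮ x - reflMap (ℝ ∙ u (m+1))ᗮ x‖ := by
              rw [ContinuousLinearMap.sub_apply, norm_sub_rev]
              rfl
          _ ≤ 4 * α (m+2) * ‖x‖ := h
    have hsummable : Summable d := by
      rw [← summable_nat_add_iff 1]
      have : (fun m => d (m + 1)) = fun m => 4 * α (m + 2) := by
        funext m; simp [hd]
      rw [this]
      exact ((summable_nat_add_iff 2).2 hsum).mul_left 4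
    exact cauchySeq_tendsto_of_complete (cauchySeq_of_dist_le_of_summable d hstep hsummable)
  · -- Part 2: stability of the symmetrization process
    intro k hk K hK
    have hbot : ∀ m, 1 ≤ m → (ℝ ∙ u m)ᗮ ≠ ⊥ := fun m hm => hyp_ne_bot hn (hu m hm)
    have htop : ∀ m, 1 ≤ m → (ℝ ∙ u m)ᗮ ≠ ⊤ := fun m hm => hyp_ne_top (hu m hm)
    obtain ⟨r, hr⟩ := hK.2.1.isBounded.subset_closedBall 0
    set ρ : ℝ := max r 0 with hρ
    have hρ0 : (0:ℝ) ≤ ρ := le_max_right _ _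
    have hKρ : K ⊆ closedBall 0 ρ := hr.trans (closedBall_subset_closedBall (le_max_left _ _))
    have hball : IsConvexBody (closedBall (0 : Euc n) ρ) :=
      ⟨⟨0, mem_closedBall_self hρ0⟩, isCompact_closedBall _ _, convex_closedBall _ _⟩
    set S : ℕ → Set (Euc n) := iterSeq (fun m => D ((ℝ ∙ u m)ᗮ)) k K with hS
    -- invariants
    have hrec : ∀ j, IsConvexBody (S j) ∧ reflMap ((ℝ ∙ u (k + j))ᗮ) '' S j = S j ∧
        S j ⊆ closedBall 0 ρ := by
      intro j
      induction j with
      | zero =>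
        have h0 : S 0 = D ((ℝ ∙ u k)ᗮ) K := rfl
        have hb := hbot k hk
        have ht := htop k hk
        refine ⟨h0 ▸ hD.body hb ht hK, ?_, ?_⟩
        · rw [Nat.add_zero, h0]
          exact hD.symmetric hb ht hK
        · rw [h0]
          have := hD.mono hb ht hK hball hKρ
          rwa [hD.inv hb ht hball (reflMap_image_ball _ ρ)] at this
      | succ j ih =>
        obtain ⟨hSb, hSsym, hSρ⟩ := ih
        have h0 : S (j + 1) = D ((ℝ ∙ u (k + j + 1))ᗮ) (S j) := rfl
        have hb := hbot (k + j + 1) (by omega)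
        have ht := htop (k + j + 1) (by omega)
        refine ⟨h0 ▸ hD.body hb ht hSb, ?_, ?_⟩
        · rw [show k + (j + 1) = k + j + 1 by omega, h0]
          exact hD.symmetric hb ht hSb
        · rw [h0]
          have := hD.mono hb ht hSb hball hSρ
          rwa [hD.inv hb ht hball (reflMap_image_ball _ ρ)] at this
    -- one-step estimate
    set δ : ℕ → ℝ := fun i => 4 * ρ * α (k + i) with hδdef
    have hδ0 : ∀ i, 0 ≤ δ i := fun i =>
      mul_nonneg (mul_nonneg (by norm_num) hρ0) (hα (k + i)).1
    have hδsum : Summable δ := by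
      have h1 : Summable (fun i => α (i + k)) := (summable_nat_add_iff k).2 hsum
      have h2 : (fun i => δ i) = fun i => (4 * ρ) * α (i + k) := by
        funext i; rw [hδdef]; simp only []; rw [Nat.add_comm k i]
      rw [hδdef] at h2 ⊢
      rw [h2]
      exact h1.mul_left (4 * ρ)
    have hstep : ∀ j, S (j + 1) ⊆ S j + closedBall 0 (δ (j + 1)) := by
      intro j
      obtain ⟨hSb, hSsym, hSρ⟩ := hrec j
      have hb := hbot (k + j + 1) (by omega)
      have ht := htop (k + j + 1) (by omega)
      have hd0 : 0 ≤ δ (j + 1) := hδ0 (j + 1)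
      have hdval : δ (j + 1) = 4 * ρ * α (k + j + 1) := by
        rfl
      -- pointwise reflection estimate on `S j`
      have hest : ∀ x ∈ S j,
          ‖reflMap ((ℝ ∙ u (k + j + 1))ᗮ) x - reflMap ((ℝ ∙ u (k + j))ᗮ) x‖ ≤ δ (j + 1) := by
        intro x hx
        have hxρ : ‖x‖ ≤ ρ := mem_closedBall_zero_iff.1 (hSρ hx)
        have hab := hangle (k + j + 1) (by omega)
        have heq : (k + j + 1) - 1 = k + j := by omega
        rw [heq] at hab
        have h := refl_close (hu (k + j + 1) (by omega)) (hu (k + j) (by omega))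
          (hα (k + j + 1)).1 hab x
        rw [hdval]
        calc ‖reflMap ((ℝ ∙ u (k + j + 1))ᗮ) x - reflMap ((ℝ ∙ u (k + j))ᗮ) x‖
            ≤ 4 * α (k + j + 1) * ‖x‖ := h
          _ ≤ 4 * ρ * α (k + j + 1) := by
              nlinarith [(hα (k + j + 1)).1, norm_nonneg x]
      set H' : Submodule ℝ (Euc n) := (ℝ ∙ u (k + j + 1))ᗮ with hH'
      set Q : Set (Euc n) := S j + closedBall 0 (δ (j + 1)) with hQ
      have hQb : IsConvexBody Q := by
        obtain ⟨x₀, hx₀⟩ := hSb.1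
        exact ⟨⟨x₀ + 0, ⟨x₀, hx₀, 0, by simpa using hd0, rfl⟩⟩,
          hSb.2.1.add (isCompact_closedBall _ _),
          hSb.2.2.add (convex_closedBall _ _)⟩
      have hSQ : S j ⊆ Q := by
        intro x hx
        exact ⟨x, hx, 0, by simpa using hd0, add_zero x⟩
      have hSQ' : S j ⊆ reflMap H' '' Q := by
        intro x hx
        refine ⟨reflMap H' x, ?_, reflMap_involutive _ _⟩
        have hrx : reflMap ((ℝ ∙ u (k + j))ᗮ) x ∈ S j := by
          rw [← hSsym]; exact ⟨x, hx, rfl⟩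
        refine ⟨reflMap ((ℝ ∙ u (k + j))ᗮ) x, hrx,
          reflMap H' x - reflMap ((ℝ ∙ u (k + j))ᗮ) x, ?_, add_sub_cancel _ _⟩
        rw [mem_closedBall_zero_iff]
        exact hest x hx
      set M : Set (Euc n) := Q ∩ (reflMap H' '' Q) with hM
      have hMb : IsConvexBody M := by
        obtain ⟨x₀, hx₀⟩ := hSb.1
        exact ⟨⟨x₀, hSQ hx₀, hSQ' hx₀⟩,
          hQb.2.1.inter_right (reflMap_compact H' hQb.2.1).isClosed,
          hQb.2.2.inter (reflMap_convex H' hQb.2.2)⟩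
      have hMsym : reflMap H' '' M = M := by
        rw [hM, Set.image_inter (reflMap_injective H'), reflMap_image_image, Set.inter_comm]
      have hsub : S (j + 1) ⊆ M := by
        have h0 : S (j + 1) = D H' (S j) := rfl
        rw [h0]
        calc D H' (S j) ⊆ D H' M :=
              hD.mono hb ht hSb hMb (Set.subset_inter hSQ hSQ')
          _ = M := hD.inv hb ht hMb hMsym
      exact hsub.trans Set.inter_subset_left
    have hne : ∀ j, (S j).Nonempty := fun j => (hrec j).1.1
    have hcpt : ∀ j, IsCompact (S j) := fun j => (hrec j).1.2.1
    have hbd : ∀ j, S j ⊆ closedBall 0 ρ := fun j => (hrec j).2.2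
    exact hausdorff_limit S ρ hne hcpt hbd δ hδ0 hδsum hstep
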